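/- Let V = [ω]^ω be the standard Borel space of infinite subsets of ℕ, and let f : V → V be the Borel function f(x) = x \ {min x}. Then the directed graph D_f generated by f admits no Borel set A ⊆ V that is both independent in the underlying graph of D_f and recurrent in D_f. -/

import Mathlib

def InfSubsetNat : Type := {x : ℕ → Bool // {n : ℕ | x n = true}.Infinite}

instance : MeasurableSpace InfSubsetNat :=
  Subtype.instMeasurableSpace

noncomputable def dropMin (x : InfSubsetNat) : InfSubsetNat :=
  ⟨fun n => if n = sInf {m : ℕ | x.1 m = true} then false else x.1 n, by
    refine Set.Infinite.mono ?_
      (x.2.diff (Set.finite_singleton (sInf {m : ℕ | x.1 m = true})))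
    intro n hn
    simp only [Set.mem_diff, Set.mem_setOf_eq, Set.mem_singleton_iff] at hn
    simp [hn.1, hn.2]⟩

namespace GPaux

/-- The support of a point of `InfSubsetNat`. -/
def supp (x : InfSubsetNat) : Set ℕ := {n : ℕ | x.1 n = true}

lemma supp_infinite (x : InfSubsetNat) : (supp x).Infinite := x.2

/-- Ellentuck-style basic set with stem `s` and reservoir `T`. -/
def box (s : Finset ℕ) (T : Set ℕ) : Set InfSubsetNat :=
  {x | ↑s ⊆ supp x ∧ supp x ⊆ ↑s ∪ T}

/-- A set is in the Ramsey family if it satisfies the completely Ramsey dichotomy. -/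
def RamseyFam (A : Set InfSubsetNat) : Prop :=
  ∀ (s : Finset ℕ) (S : Set ℕ), S.Infinite → (∀ b ∈ s, ∀ a ∈ S, b < a) →
    ∃ T, T ⊆ S ∧ T.Infinite ∧ (box s T ⊆ A ∨ box s T ∩ A = ∅)

lemma inter_Ioi_infinite {T : Set ℕ} (hT : T.Infinite) (a : ℕ) :
    (T ∩ Set.Ioi a).Infinite := by
  refine Set.Infinite.mono ?_ (hT.diff (Set.finite_Iic a))
  intro n hn
  simp only [Set.mem_diff, Set.mem_Iic] at hn
  obtain ⟨h1, h2⟩ := hn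
  exact ⟨h1, Set.mem_Ioi.2 (by omega)⟩

lemma sInf_mem_of_infinite {T : Set ℕ} (hT : T.Infinite) : sInf T ∈ T :=
  Nat.sInf_mem hT.nonempty

/-- Process a finite list of shrinking tasks. -/
lemma processList {α : Type*} (Q : α → Set ℕ → Prop) (l : List α) :
    ∀ (U₀ : Set ℕ), U₀.Infinite →
    (∀ x ∈ l, ∀ U, U ⊆ U₀ → U.Infinite → ∃ U', U' ⊆ U ∧ U'.Infinite ∧ Q x U') →
    (∀ x ∈ l, ∀ U U', Q x U → U' ⊆ U → U'.Infinite → Q x U') →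
    ∃ T, T ⊆ U₀ ∧ T.Infinite ∧ ∀ x ∈ l, Q x T := by
  induction l with
  | nil => intro U₀ h _ _; exact ⟨U₀, subset_rfl, h, by simp⟩
  | cons a l ih =>
    intro U₀ hU₀ hach hmono
    obtain ⟨U₁, hU₁sub, hU₁inf, hQ⟩ := hach a (by simp) U₀ subset_rfl hU₀
    obtain ⟨T, hTsub, hTinf, hT⟩ := ih U₁ hU₁inf
      (fun x hx U hU hUinf => hach x (by simp [hx]) U (hU.trans hU₁sub) hUinf)
      (fun x hx => hmono x (by simp [hx]))
    refine ⟨T, hTsub.trans hU₁sub, hTinf, ?_⟩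
    intro x hx
    rcases List.mem_cons.1 hx with rfl | hx
    · exact hmono x (by simp) U₁ T hQ hTsub hTinf
    · exact hT x hx

/-- Dependent-choice style recursion. -/
lemma natRecExists {σ : Type*} (P : σ → Prop) (R : σ → σ → Prop) (init : σ)
    (hinit : P init) (hstep : ∀ s, P s → ∃ s', P s' ∧ R s s') :
    ∃ f : ℕ → σ, f 0 = init ∧ (∀ k, P (f k)) ∧ ∀ k, R (f k) (f (k+1)) := by
  choose next hP hR using hstep
  let g : {s // P s} → {s // P s} := fun s => ⟨next s.1 s.2, hP s.1 s.2⟩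
  refine ⟨fun k => (g^[k] ⟨init, hinit⟩).1, rfl, fun k => (g^[k] ⟨init, hinit⟩).2, fun k => ?_⟩
  show R (g^[k] ⟨init, hinit⟩).1 (g^[k+1] ⟨init, hinit⟩).1
  rw [Function.iterate_succ_apply' g k]
  exact hR _ _


/-! ### Combinatorial forcing (Galvin's lemma) -/

section Galvin

variable (D : Finset ℕ → Prop)

/-- `T` accepts the stem `t`: every infinite subset of `T` lying above `t`, adjoined
to `t`, has an initial segment in `D` extending `t`. -/
def Accepts (t : Finset ℕ) (T : Set ℕ) : Prop :=
  ∀ y : Set ℕ, y.Infinite → y ⊆ T → (∀ b ∈ t, ∀ a ∈ y, b < a) →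
    ∃ u : Finset ℕ, D u ∧ (t : Set ℕ) ⊆ (u : Set ℕ) ∧ (u : Set ℕ) ⊆ ↑t ∪ y ∧
      ∀ a ∈ (↑t ∪ y : Set ℕ), a ∉ u → ∀ b ∈ u, b < a

def Rejects (t : Finset ℕ) (T : Set ℕ) : Prop :=
  ∀ T', T' ⊆ T → T'.Infinite → ¬ Accepts D t T'

variable {D}

lemma Accepts.mono {t : Finset ℕ} {T U : Set ℕ} (h : Accepts D t T) (hsub : U ⊆ T) :
    Accepts D t U :=
  fun y hyinf hysub hord => h y hyinf (hysub.trans hsub) hord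

lemma Rejects.mono {t : Finset ℕ} {T U : Set ℕ} (h : Rejects D t T) (hsub : U ⊆ T) :
    Rejects D t U :=
  fun T' hT' hT'inf => h T' (hT'.trans hsub) hT'inf

lemma accepts_of_mem {t : Finset ℕ} (h : D t) (T : Set ℕ) : Accepts D t T := by
  intro y hyinf hysub hord
  refine ⟨t, h, subset_rfl, Set.subset_union_left, ?_⟩
  intro a ha hat b hb
  rcases ha with ha | ha
  · exact absurd ha hat
  · exact hord b hb a ha

/-- The key lemma of combinatorial forcing: if `T` rejects `t`, one can shrink `T` so that
it rejects all one-point extensions of `t`. -/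
lemma key {t : Finset ℕ} {T : Set ℕ} (hT : T.Infinite) (hrej : Rejects D t T) :
    ∃ T', T' ⊆ T ∧ T'.Infinite ∧ ∀ a ∈ T', Rejects D (insert a t) (T' ∩ Set.Ioi a) := by
  classical
  -- recursion producing a decreasing chain deciding acceptance of one-point extensions
  have step : ∀ U : Set ℕ, (U.Infinite ∧ U ⊆ T) → ∃ U', (U'.Infinite ∧ U' ⊆ T) ∧
      (U' ⊆ U ∩ Set.Ioi (sInf U) ∧
      (Accepts D (insert (sInf U) t) U' ∨
        ∀ V, V ⊆ U ∩ Set.Ioi (sInf U) → V.Infinite → ¬ Accepts D (insert (sInf U) t) V)) := by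
    intro U hU
    by_cases h : ∃ V, V ⊆ U ∩ Set.Ioi (sInf U) ∧ V.Infinite ∧ Accepts D (insert (sInf U) t) V
    · obtain ⟨V, h1, h2, h3⟩ := h
      exact ⟨V, ⟨h2, h1.trans ((Set.inter_subset_left).trans hU.2)⟩, h1, Or.inl h3⟩
    · refine ⟨U ∩ Set.Ioi (sInf U), ⟨inter_Ioi_infinite hU.1 _,
        (Set.inter_subset_left).trans hU.2⟩, subset_rfl, Or.inr ?_⟩
      intro V hV hVinf hacc
      exact h ⟨V, hV, hVinf, hacc⟩
  obtain ⟨U, hU0, hUP, hUR⟩ := natRecExists (fun U : Set ℕ => U.Infinite ∧ U ⊆ T)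
    (fun U U' => U' ⊆ U ∩ Set.Ioi (sInf U) ∧
      (Accepts D (insert (sInf U) t) U' ∨
        ∀ V, V ⊆ U ∩ Set.Ioi (sInf U) → V.Infinite → ¬ Accepts D (insert (sInf U) t) V))
    T ⟨hT, subset_rfl⟩ step
  set a : ℕ → ℕ := fun k => sInf (U k) with ha
  have haU : ∀ k, a k ∈ U k := fun k => sInf_mem_of_infinite (hUP k).1
  have hUsucc : ∀ k, U (k+1) ⊆ U k ∩ Set.Ioi (a k) := fun k => (hUR k).1
  have hUmono : ∀ {k j : ℕ}, k ≤ j → U j ⊆ U k := by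
    intro k j hkj
    induction hkj with
    | refl => exact subset_rfl
    | step h ih => exact ((hUsucc _).trans Set.inter_subset_left).trans ih
  have hamono : StrictMono a := by
    refine strictMono_nat_of_lt_succ fun k => ?_
    have := (hUsucc k) (haU (k+1))
    exact this.2
  have haT : ∀ k, a k ∈ T := fun k => (hUP k).2 (haU k)
  -- if a j ∈ some set and a j > a i then a j ∈ U (i+1)
  have hstep2 : ∀ {i j : ℕ}, a i < a j → a j ∈ U (i+1) := by
    intro i j hij
    have : i < j := hamono.lt_iff_lt.1 hij
    exact hUmono this (haU j)
  by_cases hinf : {i : ℕ | Accepts D (insert (a i) t) (U (i+1))}.Infinite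
  · -- build an accepting set for t, contradicting rejection
    exfalso
    set L := {i : ℕ | Accepts D (insert (a i) t) (U (i+1))} with hL
    have hT'' : (a '' L).Infinite := hinf.image (hamono.injective.injOn)
    refine hrej (a '' L) ?_ hT'' ?_
    · rintro _ ⟨i, _, rfl⟩; exact haT i
    intro y hyinf hysub hord
    obtain ⟨i, hiL, hai⟩ : ∃ i, i ∈ L ∧ a i = sInf y := by
      have := sInf_mem_of_infinite hyinf
      obtain ⟨i, hiL, hai⟩ := hysub this
      exact ⟨i, hiL, hai⟩
    have hymem : ∀ v ∈ y, v ≠ a i → a i < v := by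
      intro v hv hne
      have h1 : sInf y ≤ v := Nat.sInf_le hv
      have h2 : a i ≤ v := by rw [hai]; exact h1
      omega
    have hy' : (y \ {a i}).Infinite := hyinf.diff (Set.finite_singleton _)
    have hy'sub : y \ {a i} ⊆ U (i+1) := by
      rintro v ⟨hv, hvne⟩
      simp only [Set.mem_singleton_iff] at hvne
      obtain ⟨j, _, rfl⟩ := hysub hv
      exact hstep2 (hymem _ hv hvne)
    have hordy : ∀ b ∈ insert (a i) t, ∀ v ∈ y \ {a i}, b < v := by
      intro b hb v hv
      rcases Finset.mem_insert.1 hb with rfl | hb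
      · exact hymem v hv.1 (by simpa using hv.2)
      · exact hord b hb v hv.1
    obtain ⟨u, hDu, hu1, hu2, hu3⟩ := hiL (y \ {a i}) hy' hy'sub hordy
    have hset : (↑(insert (a i) t) : Set ℕ) ∪ (y \ {a i}) = ↑t ∪ y := by
      have hmem : a i ∈ y := by rw [hai]; exact sInf_mem_of_infinite hyinf
      ext v
      simp only [Finset.coe_insert, Set.mem_union, Set.mem_insert_iff, Set.mem_diff,
        Set.mem_singleton_iff, Finset.mem_coe]
      constructor
      · rintro (h | hv)
        · rcases h with rfl | hv
          · exact Or.inr hmem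
          · exact Or.inl hv
        · exact Or.inr hv.1
      · rintro (hv | hv)
        · exact Or.inl (Or.inr hv)
        · by_cases hne : v = a i
          · exact Or.inl (Or.inl hne)
          · exact Or.inr ⟨hv, hne⟩
    refine ⟨u, hDu, ?_, ?_, ?_⟩
    · refine subset_trans ?_ hu1
      intro b hb; simp only [Finset.coe_insert, Set.mem_insert_iff]; exact Or.inr hb
    · exact hu2.trans (by rw [hset])
    · rw [← hset]; exact hu3
  · -- cofinally rejecting: tail works
    have hfin : {i : ℕ | Accepts D (insert (a i) t) (U (i+1))}.Finite := Set.not_infinite.1 hinf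
    obtain ⟨i₀, hi₀⟩ : ∃ i₀, ∀ i ∈ {i : ℕ | Accepts D (insert (a i) t) (U (i+1))}, i ≤ i₀ := by
      rcases Set.eq_empty_or_nonempty {i : ℕ | Accepts D (insert (a i) t) (U (i+1))} with he | hne
      · exact ⟨0, fun i hi => by rw [he] at hi; exact absurd hi (Set.notMem_empty i)⟩
      · obtain ⟨i₀, hub⟩ := hfin.bddAbove
        exact ⟨i₀, fun i hi => hub hi⟩
    refine ⟨a '' Set.Ioi i₀, ?_, (Set.Ioi_infinite i₀).image (hamono.injective.injOn), ?_⟩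
    · rintro _ ⟨i, _, rfl⟩; exact haT i
    rintro _ ⟨i, hi, rfl⟩ V hV hVinf hacc
    have hVsub : V ⊆ U i ∩ Set.Ioi (a i) := by
      intro v hv
      obtain ⟨hv1, hv2⟩ := hV hv
      obtain ⟨j, _, rfl⟩ := hv1
      have hij : a i < a j := hv2
      exact ⟨(hUsucc i (hstep2 hij)).1, hij⟩
    have hnotacc : ∀ V', V' ⊆ U i ∩ Set.Ioi (a i) → V'.Infinite →
        ¬ Accepts D (insert (a i) t) V' := by
      rcases (hUR i).2 with hl | hr
      · exfalso
        have h1 : i ∈ {i : ℕ | Accepts D (insert (a i) t) (U (i+1))} := hl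
        have h2 := hi₀ i h1
        have h3 : i₀ < i := hi
        omega
      · exact hr
    exact hnotacc V hVsub hVinf hacc

end Galvin

/-! ### The fusion construction -/

lemma fusion (S : Set ℕ) (hS : S.Infinite)
    (Inv : Finset ℕ → Set ℕ → Prop)
    (taskQ : Finset ℕ → Finset ℕ → Set ℕ → Prop)
    (hInvBase : Inv ∅ S)
    (hInvMono : ∀ c W W', Inv c W → W' ⊆ W → W'.Infinite → Inv c W')
    (hInvStep : ∀ c W, W.Infinite → Inv c W → (∀ t, t ⊆ c → taskQ c t W) →
        Inv (insert (sInf W) c) (W ∩ Set.Ioi (sInf W)))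
    (hmono : ∀ c t U U', taskQ c t U → U' ⊆ U → U'.Infinite → taskQ c t U')
    (hach : ∀ c t U, t ⊆ c → U.Infinite → U ⊆ S → (∀ b ∈ c, ∀ a ∈ U, b < a) → Inv c U →
        ∃ U', U' ⊆ U ∧ U'.Infinite ∧ taskQ c t U') :
    ∃ (h : ℕ → ℕ) (W : ℕ → Set ℕ),
      (∀ k, (W k).Infinite) ∧ (∀ k, W k ⊆ S) ∧ (∀ k, h k = sInf (W k)) ∧
      (∀ k, W (k+1) ⊆ W k ∩ Set.Ioi (h k)) ∧
      (∀ k, Inv (Finset.image h (Finset.range k)) (W k)) ∧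
      (∀ k t, t ⊆ Finset.image h (Finset.range k) →
        taskQ (Finset.image h (Finset.range k)) t (W k)) := by
  classical
  -- processing one stage
  have procStage : ∀ (c : Finset ℕ) (W : Set ℕ), W.Infinite → W ⊆ S →
      (∀ b ∈ c, ∀ a ∈ W, b < a) → Inv c W →
      ∃ W', W' ⊆ W ∧ W'.Infinite ∧ Inv c W' ∧ ∀ t, t ⊆ c → taskQ c t W' := by
    intro c W hWinf hWS hordc hInvW
    obtain ⟨W', h1, h2, h3⟩ := processList (fun t U => taskQ c t U) c.powerset.toList W hWinf
      (fun t ht U hU hUinf => hach c t U (Finset.mem_powerset.1 (Finset.mem_toList.1 ht)) hUinf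
        ((hU.trans subset_rfl).trans hWS)
        (fun b hb a ha => hordc b hb a (hU ha))
        (hInvMono c W U hInvW hU hUinf))
      (fun t _ U U' hQ hsub hinf => hmono c t U U' hQ hsub hinf)
    exact ⟨W', h1, h2, hInvMono c W W' hInvW h1 h2,
      fun t ht => h3 t (Finset.mem_toList.2 (Finset.mem_powerset.2 ht))⟩
  -- the state invariant
  set P : Finset ℕ × Set ℕ → Prop := fun p =>
    p.2.Infinite ∧ p.2 ⊆ S ∧ (∀ b ∈ p.1, ∀ a ∈ p.2, b < a) ∧ Inv p.1 p.2 ∧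
      ∀ t, t ⊆ p.1 → taskQ p.1 t p.2 with hP
  have init : ∃ W₀, W₀ ⊆ S ∧ P (∅, W₀) := by
    obtain ⟨W₀, h1, h2, h3, h4⟩ := procStage ∅ S hS subset_rfl (by simp) hInvBase
    exact ⟨W₀, h1, h2, h1, fun b hb => absurd hb (Finset.notMem_empty b), h3, h4⟩
  obtain ⟨W₀, hW₀S, hPW₀⟩ := init
  have stepEx : ∀ p : Finset ℕ × Set ℕ, P p → ∃ q : Finset ℕ × Set ℕ, P q ∧
      (q.1 = insert (sInf p.2) p.1 ∧ q.2 ⊆ p.2 ∩ Set.Ioi (sInf p.2)) := by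
    rintro ⟨c, W⟩ ⟨h1, h2, h3, h4, h5⟩
    have hmin : sInf W ∈ W := sInf_mem_of_infinite h1
    have hW₁inf : (W ∩ Set.Ioi (sInf W)).Infinite := inter_Ioi_infinite h1 _
    have hW₁S : W ∩ Set.Ioi (sInf W) ⊆ S := (Set.inter_subset_left).trans h2
    have hordc' : ∀ b ∈ insert (sInf W) c, ∀ a ∈ W ∩ Set.Ioi (sInf W), b < a := by
      intro b hb a ha
      rcases Finset.mem_insert.1 hb with rfl | hb
      · exact ha.2
      · exact h3 b hb a ha.1
    have hInv' : Inv (insert (sInf W) c) (W ∩ Set.Ioi (sInf W)) := hInvStep c W h1 h4 h5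
    obtain ⟨W', hs1, hs2, hs3, hs4⟩ := procStage (insert (sInf W) c) (W ∩ Set.Ioi (sInf W))
      hW₁inf hW₁S hordc' hInv'
    exact ⟨(insert (sInf W) c, W'), ⟨hs2, hs1.trans hW₁S,
      fun b hb a ha => hordc' b hb a (hs1 ha), hs3, hs4⟩, rfl, hs1⟩
  obtain ⟨f, hf0, hfP, hfR⟩ := natRecExists P
    (fun p q => q.1 = insert (sInf p.2) p.1 ∧ q.2 ⊆ p.2 ∩ Set.Ioi (sInf p.2))
    (∅, W₀) hPW₀ stepEx
  set W : ℕ → Set ℕ := fun k => (f k).2 with hWdef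
  set h : ℕ → ℕ := fun k => sInf (W k) with hhdef
  have hC : ∀ k, (f k).1 = Finset.image h (Finset.range k) := by
    intro k
    induction k with
    | zero => rw [hf0]; simp
    | succ k ih =>
      have := (hfR k).1
      rw [this, ih, Finset.range_add_one, Finset.image_insert]
  refine ⟨h, W, fun k => (hfP k).1, fun k => (hfP k).2.1, fun k => rfl,
    fun k => (hfR k).2, fun k => ?_, fun k t ht => ?_⟩
  · have := (hfP k).2.2.2.1
    rwa [hC k] at this
  · have := (hfP k).2.2.2.2 t (by rw [hC k]; exact ht)
    rwa [hC k] at this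

lemma exists_bound (h : ℕ → ℕ) (t : Finset ℕ) :
    (↑t : Set ℕ) ⊆ Set.range h → ∃ k, t ⊆ Finset.image h (Finset.range k) := by
  classical
  induction t using Finset.induction_on with
  | empty => intro _; exact ⟨0, by simp⟩
  | @insert a s ha ih =>
    intro hsub
    obtain ⟨k, hk⟩ := ih (fun b hb =>
      hsub (Finset.mem_coe.2 (Finset.mem_insert_of_mem (Finset.mem_coe.1 hb))))
    obtain ⟨i, hi⟩ := hsub (Finset.mem_coe.2 (Finset.mem_insert_self a s))
    refine ⟨max k (i+1), ?_⟩
    intro b hb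
    rcases Finset.mem_insert.1 hb with rfl | hb
    · exact Finset.mem_image.2 ⟨i, Finset.mem_range.2 (by omega), hi⟩
    · obtain ⟨j, hj, rfl⟩ := Finset.mem_image.1 (hk hb)
      exact Finset.mem_image.2 ⟨j, Finset.mem_range.2 (by
        have := Finset.mem_range.1 hj; omega), rfl⟩

/-! ### Galvin's lemma -/

theorem galvin (D : Finset ℕ → Prop) (S : Set ℕ) (hS : S.Infinite) :
    ∃ T, T ⊆ S ∧ T.Infinite ∧
      ((∀ y : Set ℕ, y.Infinite → y ⊆ T →
          ∃ u : Finset ℕ, D u ∧ (u : Set ℕ) ⊆ y ∧ ∀ a ∈ y, a ∉ u → ∀ b ∈ u, b < a) ∨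
        (∀ t : Finset ℕ, (t : Set ℕ) ⊆ T → ¬ D t)) := by
  classical
  by_cases hacc : ∃ T, T ⊆ S ∧ T.Infinite ∧ Accepts D ∅ T
  · obtain ⟨T, hTS, hTinf, hT⟩ := hacc
    refine ⟨T, hTS, hTinf, Or.inl ?_⟩
    intro y hyinf hysub
    obtain ⟨u, hDu, _, hu2, hu3⟩ := hT y hyinf hysub (by simp)
    refine ⟨u, hDu, ?_, ?_⟩
    · refine hu2.trans ?_
      simp
    · intro a ha hau b hb
      exact hu3 a (by simp [ha]) hau b hb
  · have hrej : Rejects D ∅ S := by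
      intro T' hT'S hT'inf hT'acc
      exact hacc ⟨T', hT'S, hT'inf, hT'acc⟩
    obtain ⟨h, W, hWinf, hWS, hhdef, hWsucc, hInvk, htask⟩ := fusion S hS
      (fun c W => ∀ t, t ⊆ c → Rejects D t W)
      (fun _ t U => ∀ a ∈ U, Rejects D (insert a t) (U ∩ Set.Ioi a))
      (fun t ht => by
        have h0 : t = ∅ := Finset.subset_empty.1 ht
        rw [h0]; exact hrej)
      (fun c W W' hI hsub hinf t ht => (hI t ht).mono hsub)
      (fun c W hWinf hI htasks t ht => by
        by_cases hmem : sInf W ∈ t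
        · have h₂ : t.erase (sInf W) ⊆ c := (Finset.subset_insert_iff).1 ht
          have h₃ := htasks (t.erase (sInf W)) h₂ (sInf W) (sInf_mem_of_infinite hWinf)
          rwa [Finset.insert_erase hmem] at h₃
        · have h₂ : t ⊆ c := by
            intro b hb
            rcases Finset.mem_insert.1 (ht hb) with rfl | hbc
            · exact absurd hb hmem
            · exact hbc
          exact (hI t h₂).mono Set.inter_subset_left)
      (fun c t U U' hQ hsub hinf a ha =>
        (hQ a (hsub ha)).mono (Set.inter_subset_inter_left _ hsub))
      (fun c t U ht hUinf hUS hord hI => by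
        obtain ⟨T', h1, h2, h3⟩ := key hUinf (hI t ht)
        exact ⟨T', h1, h2, h3⟩)
    have hmem : ∀ k, h k ∈ W k := fun k => by
      rw [hhdef k]; exact sInf_mem_of_infinite (hWinf k)
    have hmono : StrictMono h := strictMono_nat_of_lt_succ (fun k => (hWsucc k (hmem (k+1))).2)
    refine ⟨Set.range h, by rintro _ ⟨k, rfl⟩; exact hWS k (hmem k),
      Set.infinite_range_of_injective hmono.injective, Or.inr ?_⟩
    intro t ht hDt
    obtain ⟨k, hk⟩ := exists_bound h t ht
    exact hInvk k t hk (W k) subset_rfl (hWinf k) (accepts_of_mem hDt (W k))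


/-! ### The Ramsey family is closed under countable unions -/

theorem ramseyFam_iUnion (A : ℕ → Set InfSubsetNat) (hA : ∀ n, RamseyFam (A n)) :
    RamseyFam (⋃ n, A n) := by
  classical
  intro s S hS hord
  obtain ⟨h, W, hWinf, hWS, hhdef, hWsucc, _, htask⟩ := fusion S hS (fun _ _ => True)
    (fun c t U => ∀ n ≤ c.card, ∃ W', U ⊆ W' ∧
      (box (s ∪ t) W' ⊆ A n ∨ box (s ∪ t) W' ∩ A n = ∅))
    trivial (fun _ _ _ _ _ _ => trivial) (fun _ _ _ _ _ => trivial)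
    (fun c t U U' hQ hsub hinf n hn => by
      obtain ⟨W', h1, h2⟩ := hQ n hn
      exact ⟨W', hsub.trans h1, h2⟩)
    (fun c t U ht hUinf hUS hordc _ => by
      obtain ⟨U', h1, h2, h3⟩ := processList (fun n V => ∃ W', V ⊆ W' ∧
          (box (s ∪ t) W' ⊆ A n ∨ box (s ∪ t) W' ∩ A n = ∅)) (List.range (c.card+1)) U hUinf
        (fun n _ V hVU hVinf => by
          obtain ⟨T', hT1, hT2, hT3⟩ := hA n (s ∪ t) V hVinf (by
            intro b hb a ha
            rcases Finset.mem_union.1 hb with hb | hb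
            · exact hord b hb a (hUS (hVU ha))
            · exact hordc b (ht hb) a (hVU ha))
          exact ⟨T', hT1, hT2, T', subset_rfl, hT3⟩)
        (fun n _ V V' hQ hsub hinf => by
          obtain ⟨W', h1, h2⟩ := hQ
          exact ⟨W', hsub.trans h1, h2⟩)
      exact ⟨U', h1, h2, fun n hn => h3 n (List.mem_range.2 (by omega))⟩)
  have hmemW : ∀ k, h k ∈ W k := fun k => by
    rw [hhdef k]; exact sInf_mem_of_infinite (hWinf k)
  have hmono : StrictMono h := strictMono_nat_of_lt_succ (fun k => (hWsucc k (hmemW (k+1))).2)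
  have hWmono : ∀ {k j : ℕ}, k ≤ j → W j ⊆ W k := by
    intro k j hkj
    induction hkj with
    | refl => exact subset_rfl
    | step _ ih => exact ((hWsucc _).trans Set.inter_subset_left).trans ih
  have htail : ∀ k i, k ≤ i → h i ∈ W k := fun k i hki => hWmono hki (hmemW i)
  have hrangeS : Set.range h ⊆ S := by rintro _ ⟨k, rfl⟩; exact hWS k (hmemW k)
  set Dp : Finset ℕ → Prop := fun t => ∃ n W', (∀ i, (∀ b ∈ t, b < h i) → h i ∈ W') ∧
    box (s ∪ t) W' ⊆ A n with hDp
  obtain ⟨T, hTsub, hTinf, hTalt⟩ := galvin Dp (Set.range h)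
    (Set.infinite_range_of_injective hmono.injective)
  refine ⟨T, hTsub.trans hrangeS, hTinf, ?_⟩
  rcases hTalt with hpos | hneg
  · left
    intro x hx
    set y : Set ℕ := supp x \ ↑s with hy
    have hyinf : y.Infinite := (supp_infinite x).diff (Finset.finite_toSet s)
    have hysubT : y ⊆ T := by
      intro v hv
      rcases hx.2 hv.1 with hvs | hvT
      · exact absurd hvs hv.2
      · exact hvT
    obtain ⟨u, hDu, huy, huinit⟩ := hpos y hyinf hysubT
    obtain ⟨n, W', hWall, hbox⟩ := hDu
    refine Set.mem_iUnion.2 ⟨n, hbox ⟨?_, ?_⟩⟩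
    · intro b hb
      simp only [Finset.coe_union, Set.mem_union, Finset.mem_coe] at hb
      rcases hb with hb | hb
      · exact hx.1 (Finset.mem_coe.2 hb)
      · exact (huy (Finset.mem_coe.2 hb)).1
    · intro v hv
      by_cases hvs : v ∈ (↑s : Set ℕ)
      · exact Or.inl (Finset.mem_coe.2 (Finset.mem_union_left _ (Finset.mem_coe.1 hvs)))
      · have hvy : v ∈ y := ⟨hv, hvs⟩
        by_cases hvu : v ∈ u
        · exact Or.inl (Finset.mem_coe.2 (Finset.mem_union_right _ hvu))
        · obtain ⟨i, rfl⟩ := hTsub (hysubT hvy)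
          exact Or.inr (hWall i (fun b hb => huinit _ hvy hvu b hb))
  · right
    rw [Set.eq_empty_iff_forall_notMem]
    rintro x ⟨hxbox, hxU⟩
    obtain ⟨n, hxn⟩ := Set.mem_iUnion.1 hxU
    set y : Set ℕ := supp x \ ↑s with hy
    have hyinf : y.Infinite := (supp_infinite x).diff (Finset.finite_toSet s)
    have hysubT : y ⊆ T := by
      intro v hv
      rcases hxbox.2 hv.1 with hvs | hvT
      · exact absurd hvs hv.2
      · exact hvT
    obtain ⟨b, hby, hbgt⟩ : ∃ b, b ∈ y ∧ h n < b := by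
      obtain ⟨b, hb⟩ := (inter_Ioi_infinite hyinf (h n)).nonempty
      exact ⟨b, hb.1, hb.2⟩
    obtain ⟨j, rfl⟩ := hTsub (hysubT hby)
    have hnj : n ≤ j := le_of_lt (hmono.lt_iff_lt.1 hbgt)
    have hfin : (y ∩ Set.Iic (h j)).Finite := (Set.finite_Iic _).subset Set.inter_subset_right
    set t : Finset ℕ := hfin.toFinset with htdef
    have htmem : ∀ v, v ∈ t ↔ v ∈ y ∧ v ≤ h j := by
      intro v; rw [htdef, Set.Finite.mem_toFinset]; exact Iff.rfl
    have htsuby : (↑t : Set ℕ) ⊆ y := fun v hv => ((htmem v).1 (Finset.mem_coe.1 hv)).1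
    have ht1 : t ⊆ Finset.image h (Finset.range (j+1)) := by
      intro v hv
      obtain ⟨hvy, hvle⟩ := (htmem v).1 hv
      obtain ⟨i, rfl⟩ := hTsub (hysubT hvy)
      exact Finset.mem_image.2 ⟨i, Finset.mem_range.2 (by
        have := hmono.le_iff_le.1 hvle; omega), rfl⟩
    have hcard : n ≤ (Finset.image h (Finset.range (j+1))).card := by
      rw [Finset.card_image_of_injective _ hmono.injective, Finset.card_range]
      omega
    obtain ⟨W', hWsub, hdec⟩ := htask (j+1) t ht1 n hcard
    have hjt : h j ∈ t := (htmem (h j)).2 ⟨hby, le_refl _⟩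
    have htailW' : ∀ i, (∀ b ∈ t, b < h i) → h i ∈ W' := by
      intro i hib
      have h1 : h j < h i := hib (h j) hjt
      exact hWsub (htail (j+1) i (hmono.lt_iff_lt.1 h1))
    rcases hdec with hposdec | hnegdec
    · exact hneg t (htsuby.trans hysubT) ⟨n, W', htailW', hposdec⟩
    · have hxmem : x ∈ box (s ∪ t) W' := by
        constructor
        · intro v hv
          simp only [Finset.coe_union, Set.mem_union, Finset.mem_coe] at hv
          rcases hv with hv | hv
          · exact hxbox.1 hv
          · exact (htsuby (Finset.mem_coe.2 hv)).1
        · intro v hv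
          by_cases hvs : v ∈ (↑s : Set ℕ)
          · exact Or.inl (Finset.mem_coe.2 (Finset.mem_union_left _ (Finset.mem_coe.1 hvs)))
          · have hvy : v ∈ y := ⟨hv, hvs⟩
            by_cases hvle : v ≤ h j
            · exact Or.inl (Finset.mem_coe.2 (Finset.mem_union_right _ ((htmem v).2 ⟨hvy, hvle⟩)))
            · obtain ⟨i, rfl⟩ := hTsub (hysubT hvy)
              have : j < i := hmono.lt_iff_lt.1 (by omega)
              exact Or.inr (hWsub (htail (j+1) i this))
      rw [Set.eq_empty_iff_forall_notMem] at hnegdec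
      exact hnegdec x ⟨hxmem, hxn⟩

/-! ### The Ramsey family forms a σ-algebra containing the generators -/

lemma ramseyFam_empty : RamseyFam (∅ : Set InfSubsetNat) :=
  fun _ S hS _ => ⟨S, subset_rfl, hS, Or.inr (Set.inter_empty _)⟩

lemma ramseyFam_compl {A : Set InfSubsetNat} (hA : RamseyFam A) : RamseyFam Aᶜ := by
  intro s S hS hord
  obtain ⟨T, h1, h2, h3⟩ := hA s S hS hord
  refine ⟨T, h1, h2, ?_⟩
  rcases h3 with h3 | h3
  · right
    rw [Set.eq_empty_iff_forall_notMem]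
    rintro x ⟨hx1, hx2⟩
    exact hx2 (h3 hx1)
  · left
    intro x hx hxA
    rw [Set.eq_empty_iff_forall_notMem] at h3
    exact h3 x ⟨hx, hxA⟩

lemma ramseyFam_coord (n : ℕ) (B : Set Bool) :
    RamseyFam {x : InfSubsetNat | x.1 n ∈ B} := by
  classical
  intro s S hS hord
  refine ⟨S ∩ Set.Ioi n, Set.inter_subset_left, inter_Ioi_infinite hS n, ?_⟩
  have hconst : ∀ x ∈ box s (S ∩ Set.Ioi n), (x.1 n = true ↔ n ∈ s) := by
    intro x hx
    constructor
    · intro hxn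
      have hn : n ∈ supp x := hxn
      rcases hx.2 hn with hmem | hmem
      · exact Finset.mem_coe.1 hmem
      · exact absurd hmem.2 (by simp)
    · intro hns
      exact hx.1 (Finset.mem_coe.2 hns)
  by_cases hns : n ∈ s
  · by_cases htB : true ∈ B
    · left
      intro x hx
      have hxt : x.1 n = true := (hconst x hx).2 hns
      show x.1 n ∈ B
      rw [hxt]; exact htB
    · right
      rw [Set.eq_empty_iff_forall_notMem]
      rintro x ⟨hx1, hx2⟩
      have hxt : x.1 n = true := (hconst x hx1).2 hns
      have : x.1 n ∈ B := hx2
      rw [hxt] at this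
      exact htB this
  · by_cases hfB : false ∈ B
    · left
      intro x hx
      have hxf : x.1 n = false := by
        cases hxn : x.1 n with
        | false => rfl
        | true => exact absurd ((hconst x hx).1 hxn) hns
      show x.1 n ∈ B
      rw [hxf]; exact hfB
    · right
      rw [Set.eq_empty_iff_forall_notMem]
      rintro x ⟨hx1, hx2⟩
      have hxf : x.1 n = false := by
        cases hxn : x.1 n with
        | false => rfl
        | true => exact absurd ((hconst x hx1).1 hxn) hns
      have : x.1 n ∈ B := hx2
      rw [hxf] at this
      exact hfB this

/-- The σ-algebra of Ramsey sets on the coding space. -/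
def ramseyMS : MeasurableSpace (ℕ → Bool) where
  MeasurableSet' B := RamseyFam (Subtype.val ⁻¹' B)
  measurableSet_empty := by
    show RamseyFam (Subtype.val ⁻¹' (∅ : Set (ℕ → Bool)))
    exact ramseyFam_empty
  measurableSet_compl := fun B hB => by
    show RamseyFam (Subtype.val ⁻¹' Bᶜ)
    exact ramseyFam_compl hB
  measurableSet_iUnion := fun f hf => by
    show RamseyFam (Subtype.val ⁻¹' ⋃ i, f i)
    have hpre := Set.preimage_iUnion (f := (Subtype.val : InfSubsetNat → ℕ → Bool)) (s := f)
    exact (congrArg RamseyFam hpre).mpr (ramseyFam_iUnion _ hf)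

lemma pi_le_ramseyMS : (inferInstance : MeasurableSpace (ℕ → Bool)) ≤ ramseyMS := by
  have hpi : (inferInstance : MeasurableSpace (ℕ → Bool)) = MeasurableSpace.pi := rfl
  rw [hpi]
  refine iSup_le fun n => ?_
  intro B hB
  obtain ⟨B', _, rfl⟩ := hB
  exact ramseyFam_coord n B'

lemma ramseyFam_of_measurable {A : Set InfSubsetNat} (hA : MeasurableSet A) : RamseyFam A := by
  obtain ⟨B, hB, rfl⟩ := hA
  exact pi_le_ramseyMS B hB

/-! ### Points from infinite sets and the behaviour of `dropMin` -/

open Classical in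
noncomputable def mkPt (Z : Set ℕ) (hZ : Z.Infinite) : InfSubsetNat :=
  ⟨fun n => if n ∈ Z then true else false, by
    have h : {n : ℕ | (if n ∈ Z then true else false) = true} = Z := by
      ext n; by_cases h : n ∈ Z <;> simp [h]
    rw [h]; exact hZ⟩

lemma supp_mkPt (Z : Set ℕ) (hZ : Z.Infinite) : supp (mkPt Z hZ) = Z := by
  ext n
  by_cases h : n ∈ Z <;> simp [supp, mkPt, h]

lemma supp_dropMin (x : InfSubsetNat) : supp (dropMin x) = supp x \ {sInf (supp x)} := by
  ext n
  simp only [supp, dropMin, Set.mem_setOf_eq, Set.mem_diff, Set.mem_singleton_iff]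
  by_cases h : n = sInf {m : ℕ | x.1 m = true}
  · simp only [if_pos h]
    constructor
    · intro hfalse; exact absurd hfalse (by simp)
    · rintro ⟨_, hne⟩; exact absurd h hne
  · simp only [if_neg h]
    exact ⟨fun hx => ⟨hx, h⟩, fun hx => hx.1⟩

lemma dropMin_ne (x : InfSubsetNat) : dropMin x ≠ x := by
  intro h
  have hcong := congrArg supp h
  rw [supp_dropMin] at hcong
  have hm : sInf (supp x) ∈ supp x := sInf_mem_of_infinite (supp_infinite x)
  have hnot : sInf (supp x) ∉ supp x \ {sInf (supp x)} := fun hmem => hmem.2 rfl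
  rw [hcong] at hnot
  exact hnot hm

lemma supp_iterate_subset (x : InfSubsetNat) (k : ℕ) : supp (dropMin^[k] x) ⊆ supp x := by
  induction k with
  | zero => exact subset_rfl
  | succ k ih =>
    rw [Function.iterate_succ_apply']
    rw [supp_dropMin]
    exact (Set.diff_subset).trans ih

end GPaux

theorem no_independent_recurrent_borel_set :
    ¬ ∃ A : Set InfSubsetNat, MeasurableSet A ∧
      (∀ x ∈ A, ∀ y ∈ A, x ≠ y → dropMin x ≠ y ∧ dropMin y ≠ x) ∧
      (∀ x : InfSubsetNat, ∃ k : ℕ, dropMin^[k] x ∈ A) := by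
  rintro ⟨A, hmeas, hind, hrec⟩
  obtain ⟨T, -, hTinf, hdich⟩ := GPaux.ramseyFam_of_measurable hmeas ∅ Set.univ
    Set.infinite_univ (fun b hb => absurd hb (Finset.notMem_empty b))
  have hboxmem : ∀ z : InfSubsetNat, GPaux.supp z ⊆ T → z ∈ GPaux.box ∅ T := by
    intro z hz
    exact ⟨by simp, by intro v hv; exact Or.inr (hz hv)⟩
  set x₀ := GPaux.mkPt T hTinf with hx₀def
  have hx₀ : GPaux.supp x₀ = T := GPaux.supp_mkPt T hTinf
  rcases hdich with hpos | hneg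
  · have hx₀A : x₀ ∈ A := hpos (hboxmem x₀ (by rw [hx₀]))
    have hdA : dropMin x₀ ∈ A := hpos (hboxmem _ (by
      rw [GPaux.supp_dropMin, hx₀]; exact Set.diff_subset))
    have hne : x₀ ≠ dropMin x₀ := fun h => GPaux.dropMin_ne x₀ h.symm
    exact (hind x₀ hx₀A (dropMin x₀) hdA hne).1 rfl
  · obtain ⟨k, hk⟩ := hrec x₀
    have hmem : dropMin^[k] x₀ ∈ GPaux.box ∅ T := hboxmem _ (by
      rw [← hx₀]; exact GPaux.supp_iterate_subset x₀ k)
    rw [Set.eq_empty_iff_forall_notMem] at hneg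
    exact hneg _ ⟨hmem, hk⟩
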